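/- Let X ⊆ E be a nonempty closed convex set with diameter at most D, Φ : E → ℝ differentiable with ∇Φ L-Lipschitz on X, ‖∇Φ(x)‖ ≤ G for all x ∈ X, and Φ_min ≤ Φ(x) ≤ Φ_max for all x ∈ X. Suppose F(x) = −∇Φ(x) + R(x) with ‖R(x)‖ ≤ ε for all x ∈ X. Let 0 < η ≤ 1/L, T ≥ 1, and let directions g_t ∈ E with ‖g_t − ∇Φ(x_t)‖ ≤ δ̄ for all t, and iterates x₀ ∈ X, x_{t+1} ∈ X satisfy for each t the projection variational inequality ⟨(x_t + ηg_t) − x_{t+1}, z − x_{t+1}⟩ ≤ 0 for all z ∈ X. Then there exists t̂ ∈ {0,…,T−1} such that Gap(x_{t̂}) = sup_{u ∈ X} ⟨F(x_{t̂}), x_{t̂} − u⟩ ≤ (D + η(G + δ̄))·√(4(Φ_max − Φ_min)/(Tη) + 4δ̄²) + D(ε + δ̄). -/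

import Mathlib

open RealInnerProductSpace

lemma descent_aux {d : ℕ} (Φ : EuclideanSpace ℝ (Fin d) → ℝ) (hΦ : Differentiable ℝ Φ)
    (L : ℝ) (hL : 0 ≤ L) (a v : EuclideanSpace ℝ (Fin d))
    (hlip : ∀ s ∈ Set.Icc (0:ℝ) 1, ∀ t ∈ Set.Icc (0:ℝ) 1,
      ‖gradient Φ (a + s • v) - gradient Φ (a + t • v)‖ ≤ L * |s - t| * ‖v‖) :
    Φ a + ⟪gradient Φ a, v⟫ - L / 2 * ‖v‖ ^ 2 ≤ Φ (a + v) := by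
  set φ' : ℝ → ℝ := fun s => ⟪gradient Φ (a + s • v), v⟫ with hφ'
  have hderiv : ∀ s : ℝ, HasDerivAt (fun s : ℝ => Φ (a + s • v)) (φ' s) s := by
    intro s
    have hc : HasDerivAt (fun s : ℝ => a + s • v) v s := by
      simpa using (((hasDerivAt_id s).smul_const v).const_add a)
    have hf := ((hΦ (a + s • v)).hasGradientAt).hasFDerivAt
    have := hf.comp_hasDerivAt s hc
    exact this
  have hcont : ContinuousOn φ' (Set.Icc (0:ℝ) 1) := by
    have : LipschitzOnWith (Real.toNNReal (L * ‖v‖ ^ 2)) φ' (Set.Icc (0:ℝ) 1) := by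
      rw [lipschitzOnWith_iff_dist_le_mul]
      intro s hs t ht
      rw [Real.dist_eq, Real.dist_eq]
      have h1 : |φ' s - φ' t| ≤ ‖gradient Φ (a + s • v) - gradient Φ (a + t • v)‖ * ‖v‖ := by
        rw [hφ']
        simp only [← inner_sub_left]
        exact abs_real_inner_le_norm _ _
      have h2 := hlip s hs t ht
      have h3 : (Real.toNNReal (L * ‖v‖ ^ 2) : ℝ) = max (L * ‖v‖ ^ 2) 0 := by
        simp [Real.coe_toNNReal']
      rw [h3]
      have hnn : 0 ≤ ‖v‖ := norm_nonneg _
      nlinarith [abs_nonneg (s - t), le_max_left (L * ‖v‖ ^ 2) 0, mul_le_mul_of_nonneg_right h2 hnn]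
    exact this.continuousOn
  have hint : IntervalIntegrable φ' MeasureTheory.volume 0 1 := by
    apply ContinuousOn.intervalIntegrable
    rwa [Set.uIcc_of_le (by norm_num : (0:ℝ) ≤ 1)]
  have key : ∫ s in (0:ℝ)..1, φ' s = Φ (a + v) - Φ a := by
    have := intervalIntegral.integral_eq_sub_of_hasDerivAt
      (f := fun s : ℝ => Φ (a + s • v)) (f' := φ') (a := 0) (b := 1)
      (fun s _ => hderiv s) hint
    simpa using this
  have hlow : ∀ s ∈ Set.Icc (0:ℝ) 1, φ' 0 - L * ‖v‖ ^ 2 * s ≤ φ' s := by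
    intro s hs
    have h1 : φ' 0 - φ' s ≤ ‖gradient Φ (a + (0:ℝ) • v) - gradient Φ (a + s • v)‖ * ‖v‖ := by
      rw [hφ']
      simp only [← inner_sub_left]
      exact real_inner_le_norm _ _
    have h2 := hlip 0 (by norm_num) s hs
    have habs : |0 - s| = s := by rw [abs_sub_comm]; simpa using abs_of_nonneg hs.1
    rw [habs] at h2
    nlinarith [mul_le_mul_of_nonneg_right h2 (norm_nonneg v)]
  have hmono : ∫ s in (0:ℝ)..1, (φ' 0 - L * ‖v‖ ^ 2 * s) ≤ ∫ s in (0:ℝ)..1, φ' s := by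
    apply intervalIntegral.integral_mono_on (by norm_num)
    · exact (intervalIntegrable_const).sub (((by fun_prop : Continuous fun s : ℝ => L * ‖v‖ ^ 2 * s)).intervalIntegrable _ _)
    · exact hint
    · exact hlow
  have hcomp : ∫ s in (0:ℝ)..1, (φ' 0 - L * ‖v‖ ^ 2 * s) = φ' 0 - L / 2 * ‖v‖ ^ 2 := by
    rw [intervalIntegral.integral_sub intervalIntegrable_const
      (((by fun_prop : Continuous fun s : ℝ => L * ‖v‖ ^ 2 * s)).intervalIntegrable _ _),
      intervalIntegral.integral_const, intervalIntegral.integral_const_mul,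
      integral_id]
    simp
    ring
  have hφ'0 : φ' 0 = ⟪gradient Φ a, v⟫ := by simp [hφ']
  rw [hcomp, hφ'0] at hmono
  rw [key] at hmono
  linarith

set_option maxHeartbeats 1000000 in
/-- Effect of projection error: for inexact projected ascent with directions `g_t` satisfying
`‖g_t − ∇Φ(x_t)‖ ≤ δ̄`, `F = −∇Φ + R` with `‖R‖ ≤ ε` on `X`, and `0 < η ≤ 1/L`, some
iterate `x_t̂`, `t̂ < T`, satisfies
`Gap(x_t̂) ≤ (D + η(G + δ̄))·√(4(Φ_max − Φ_min)/(Tη) + 4δ̄²) + D(ε + δ̄)`. -/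
theorem stmt_18 {d : ℕ} (X : Set (EuclideanSpace ℝ (Fin d)))
    (hne : X.Nonempty) (hcl : IsClosed X) (hconv : Convex ℝ X)
    (D : ℝ) (hD : ∀ a ∈ X, ∀ b ∈ X, ‖a - b‖ ≤ D)
    (Φ : EuclideanSpace ℝ (Fin d) → ℝ) (hΦ : Differentiable ℝ Φ)
    (L : ℝ) (hL : 0 < L)
    (hlip : ∀ a ∈ X, ∀ b ∈ X, ‖gradient Φ a - gradient Φ b‖ ≤ L * ‖a - b‖)
    (G : ℝ) (hG : ∀ y ∈ X, ‖gradient Φ y‖ ≤ G)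
    (Φmin Φmax : ℝ) (hΦbd : ∀ y ∈ X, Φmin ≤ Φ y ∧ Φ y ≤ Φmax)
    (F R : EuclideanSpace ℝ (Fin d) → EuclideanSpace ℝ (Fin d))
    (hF : ∀ y, F y = -gradient Φ y + R y)
    (ε : ℝ) (hR : ∀ y ∈ X, ‖R y‖ ≤ ε)
    (η : ℝ) (hη0 : 0 < η) (hη : η ≤ 1 / L)
    (T : ℕ) (hT : 1 ≤ T)
    (δbar : ℝ)
    (g : ℕ → EuclideanSpace ℝ (Fin d))
    (x : ℕ → EuclideanSpace ℝ (Fin d)) (hxX : ∀ t, x t ∈ X)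
    (hg : ∀ t, ‖g t - gradient Φ (x t)‖ ≤ δbar)
    (hVI : ∀ t, ∀ z ∈ X,
      ⟪(x t + η • g t) - x (t + 1), z - x (t + 1)⟫ ≤ 0) :
    ∃ that : ℕ, that < T ∧
      (⨆ u : X, ⟪F (x that), x that - (u : EuclideanSpace ℝ (Fin d))⟫) ≤
        (D + η * (G + δbar)) *
          Real.sqrt (4 * (Φmax - Φmin) / (T * η) + 4 * δbar ^ 2) +
        D * (ε + δbar) := by
  haveI : Nonempty X := hne.to_subtype
  set r : ℕ → EuclideanSpace ℝ (Fin d) := fun t => x (t + 1) - x t with hr_def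
  have hD0 : 0 ≤ D := le_trans (by simp) (hD hne.choose hne.choose_spec hne.choose hne.choose_spec)
  have hG0 : 0 ≤ G := le_trans (norm_nonneg _) (hG (x 0) (hxX 0))
  have hδ0 : 0 ≤ δbar := le_trans (norm_nonneg _) (hg 0)
  have hηL : η * L ≤ 1 := by
    rw [le_div_iff₀ hL] at hη; linarith
  have hΦmm : Φmin ≤ Φmax := le_trans (hΦbd (x 0) (hxX 0)).1 (hΦbd (x 0) (hxX 0)).2
  have hT0 : (0:ℝ) < T := by exact_mod_cast Nat.lt_of_lt_of_le Nat.zero_lt_one hT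
  -- step 1: ‖r t‖² ≤ η ⟪g t, r t⟫
  have hstep : ∀ t, ‖r t‖ ^ 2 ≤ η * ⟪g t, r t⟫ := by
    intro t
    have h := hVI t (x t) (hxX t)
    have e1 : (x t + η • g t) - x (t + 1) = η • g t - r t := by
      rw [hr_def]; module
    have e2 : x t - x (t + 1) = -r t := by rw [hr_def]; module
    rw [e1, e2] at h
    have h' : ⟪η • g t - r t, -r t⟫ = -(η * ⟪g t, r t⟫) + ‖r t‖ ^ 2 := by
      rw [inner_sub_left, inner_neg_right, inner_neg_right, real_inner_smul_left,
        real_inner_self_eq_norm_sq]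
      ring
    rw [h'] at h
    linarith
  -- step 2: descent inequality per step
  have hΦstep : ∀ t, ‖r t‖ ^ 2 ≤ 4 * η * (Φ (x (t + 1)) - Φ (x t)) + 4 * η ^ 2 * δbar ^ 2 := by
    intro t
    have hdes := descent_aux Φ hΦ L hL.le (x t) (r t) ?_
    · have hav : x t + r t = x (t + 1) := by rw [hr_def]; module
      rw [hav] at hdes
      -- ⟪∇, r⟫ ≥ ⟪g, r⟫ - δ̄‖r‖ ≥ ‖r‖²/η - δ̄‖r‖
      have h1 : ⟪g t - gradient Φ (x t), r t⟫ ≤ δbar * ‖r t‖ :=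
        le_trans (real_inner_le_norm _ _) (mul_le_mul_of_nonneg_right (hg t) (norm_nonneg _))
      have h2 := hstep t
      have h3 : ⟪g t, r t⟫ = ⟪gradient Φ (x t), r t⟫ + ⟪g t - gradient Φ (x t), r t⟫ := by
        rw [← inner_add_left]
        congr 1
        abel
      nlinarith [sq_nonneg (‖r t‖ - 2 * η * δbar), sq_nonneg (‖r t‖), hη0.le,
        mul_le_mul_of_nonneg_right hηL (sq_nonneg (‖r t‖)), sq_nonneg η]
    · intro s hs t' ht'
      have hmem : ∀ u : ℝ, u ∈ Set.Icc (0:ℝ) 1 → x t + u • r t ∈ X := by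
        intro u hu
        have := hconv (hxX t) (hxX (t + 1)) (by linarith [hu.2] : (0:ℝ) ≤ 1 - u) hu.1 (by ring)
        convert this using 1
        rw [hr_def]; module
      have := hlip _ (hmem s hs) _ (hmem t' ht')
      have he : x t + s • r t - (x t + t' • r t) = (s - t') • r t := by module
      rw [he, norm_smul] at this
      simpa [Real.norm_eq_abs, mul_assoc] using this
  -- step 3: telescoping sum
  have hsum : ∑ t ∈ Finset.range T, ‖r t‖ ^ 2 ≤
      4 * η * (Φmax - Φmin) + T * (4 * η ^ 2 * δbar ^ 2) := by
    calc ∑ t ∈ Finset.range T, ‖r t‖ ^ 2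
        ≤ ∑ t ∈ Finset.range T, (4 * η * (Φ (x (t + 1)) - Φ (x t)) + 4 * η ^ 2 * δbar ^ 2) :=
          Finset.sum_le_sum fun t _ => hΦstep t
      _ = 4 * η * (Φ (x T) - Φ (x 0)) + T * (4 * η ^ 2 * δbar ^ 2) := by
          rw [Finset.sum_add_distrib, ← Finset.mul_sum, Finset.sum_range_sub (fun n => Φ (x n))]
          simp [mul_comm]
      _ ≤ _ := by
          have h1 := (hΦbd (x T) (hxX T)).2
          have h2 := (hΦbd (x 0) (hxX 0)).1
          have : Φ (x T) - Φ (x 0) ≤ Φmax - Φmin := by linarith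
          nlinarith [hη0.le]
  -- step 4: some iterate has small step
  set S : ℝ := 4 * (Φmax - Φmin) / (T * η) + 4 * δbar ^ 2 with hS_def
  have hS0 : 0 ≤ S := by
    rw [hS_def]
    have : 0 ≤ 4 * (Φmax - Φmin) / (T * η) := by
      apply div_nonneg (by linarith) (by positivity)
    positivity
  obtain ⟨that, hthat, hsmall⟩ : ∃ t ∈ Finset.range T, ‖r t‖ ^ 2 ≤ η ^ 2 * S := by
    by_contra hcon
    push_neg at hcon
    have : ∑ t ∈ Finset.range T, (η ^ 2 * S) < ∑ t ∈ Finset.range T, ‖r t‖ ^ 2 := by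
      apply Finset.sum_lt_sum_of_nonempty
      · exact ⟨0, Finset.mem_range.mpr (Nat.lt_of_lt_of_le Nat.zero_lt_one hT)⟩
      · exact fun i hi => hcon i hi
    rw [Finset.sum_const, Finset.card_range, nsmul_eq_mul] at this
    have heq : (T:ℝ) * (η ^ 2 * S) = 4 * η * (Φmax - Φmin) + T * (4 * η ^ 2 * δbar ^ 2) := by
      rw [hS_def]; field_simp
    linarith [hsum]
  rw [Finset.mem_range] at hthat
  have hrs : ‖r that‖ ≤ η * Real.sqrt S := by
    calc ‖r that‖ = Real.sqrt (‖r that‖ ^ 2) := (Real.sqrt_sq (norm_nonneg _)).symm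
      _ ≤ Real.sqrt (η ^ 2 * S) := Real.sqrt_le_sqrt hsmall
      _ = η * Real.sqrt S := by
          rw [Real.sqrt_mul (sq_nonneg η), Real.sqrt_sq hη0.le]
  refine ⟨that, hthat, ciSup_le fun u => ?_⟩
  set t := that
  have hdecomp : ⟪F (x t), x t - (u : EuclideanSpace ℝ (Fin d))⟫ =
      ⟪gradient Φ (x t) - g t, (u : EuclideanSpace ℝ (Fin d)) - x t⟫ + ⟪g t, (u : EuclideanSpace ℝ (Fin d)) - x (t + 1)⟫ +
        ⟪g t, x (t + 1) - x t⟫ + ⟪R (x t), x t - (u : EuclideanSpace ℝ (Fin d))⟫ := by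
    rw [hF]
    simp only [inner_add_left, inner_sub_left, inner_sub_right, inner_neg_left]
    ring
  have h1 : ⟪gradient Φ (x t) - g t, (u : EuclideanSpace ℝ (Fin d)) - x t⟫ ≤ δbar * D := by
    refine le_trans (real_inner_le_norm _ _) ?_
    have : ‖gradient Φ (x t) - g t‖ = ‖g t - gradient Φ (x t)‖ := norm_sub_rev _ _
    exact mul_le_mul (this ▸ hg t) (hD _ u.2 _ (hxX t)) (norm_nonneg _) hδ0
  have h2 : η * ⟪g t, (u : EuclideanSpace ℝ (Fin d)) - x (t + 1)⟫ ≤ D * ‖r t‖ := by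
    have h := hVI t (u : EuclideanSpace ℝ (Fin d)) u.2
    have e1 : (x t + η • g t) - x (t + 1) = η • g t - r t := by rw [hr_def]; module
    rw [e1] at h
    have h' : ⟪η • g t - r t, (u : EuclideanSpace ℝ (Fin d)) - x (t + 1)⟫ =
        η * ⟪g t, (u : EuclideanSpace ℝ (Fin d)) - x (t + 1)⟫ -
          ⟪r t, (u : EuclideanSpace ℝ (Fin d)) - x (t + 1)⟫ := by
      rw [inner_sub_left, real_inner_smul_left]
    rw [h'] at h
    have h3 : ⟪r t, (u : EuclideanSpace ℝ (Fin d)) - x (t + 1)⟫ ≤ ‖r t‖ * D :=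
      le_trans (real_inner_le_norm _ _)
        (mul_le_mul_of_nonneg_left (hD _ u.2 _ (hxX (t + 1))) (norm_nonneg _))
    linarith [h, h3]
  have h3 : ⟪g t, x (t + 1) - x t⟫ ≤ (G + δbar) * ‖r t‖ := by
    refine le_trans (real_inner_le_norm _ _) (mul_le_mul_of_nonneg_right ?_ (norm_nonneg _))
    calc ‖g t‖ = ‖gradient Φ (x t) + (g t - gradient Φ (x t))‖ := by
          rw [show gradient Φ (x t) + (g t - gradient Φ (x t)) = g t by module]
      _ ≤ ‖gradient Φ (x t)‖ + ‖g t - gradient Φ (x t)‖ := norm_add_le _ _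
      _ ≤ G + δbar := add_le_add (hG _ (hxX t)) (hg t)
  have h4 : ⟪R (x t), x t - (u : EuclideanSpace ℝ (Fin d))⟫ ≤ ε * D :=
    le_trans (real_inner_le_norm _ _)
      (mul_le_mul (hR _ (hxX t)) (hD _ (hxX t) _ u.2)
        (norm_nonneg _) (le_trans (norm_nonneg _) (hR _ (hxX t))))
  rw [hdecomp]
  rw [← mul_le_mul_iff_right₀ hη0]
  have hρ0 : 0 ≤ Real.sqrt S := Real.sqrt_nonneg _
  linarith [mul_le_mul_of_nonneg_left h1 hη0.le, h2,
    mul_le_mul_of_nonneg_left h3 hη0.le, mul_le_mul_of_nonneg_left h4 hη0.le,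
    mul_le_mul_of_nonneg_left hrs hD0,
    mul_le_mul_of_nonneg_left hrs (mul_nonneg hη0.le (add_nonneg hG0 hδ0))]
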